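/- Define D(y,z) = ψ(z)[(ρ+κ)(c − R̃(z,y))Q₁(z) + Q₀'(z)] and N(y,z) = Q₀(z)[((ρ+2κ)/ρ)ψ'(z) + (ρ+κ)(c − R̃(z,y))ψ''(z) + ψ'(z)], where Q_k(z) = ψ^{(k)}ψ^{(k+2)} − (ψ^{(k+1)})² and R̃(z,y) = (μκ + ρz − β(ρ+2κ)y)/(ρ(ρ+κ)). Then for any (y,z) ∈ ℝ², D(y,z) ≥ 0 implies N(y,z) > D(y,z). -/

import Mathlib

open Set

/-- Parabolic cylinder function `D_α(x)` for `α < 0` (integral representation). -/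
noncomputable def Dcyl (α x : ℝ) : ℝ :=
  Real.exp (-x ^ 2 / 4) / Real.Gamma (-α) *
    ∫ t in Ioi (0 : ℝ), t ^ (-α - 1) * Real.exp (-t ^ 2 / 2 - x * t)

/-- Increasing fundamental solution of `(σ²/2)u'' + κ(μ−x)u' − ρu = 0`. -/
noncomputable def psi (κ μ σ ρ : ℝ) (x : ℝ) : ℝ :=
  Real.exp (κ * (x - μ) ^ 2 / (2 * σ ^ 2)) *
    Dcyl (-(ρ / κ)) (-((x - μ) / σ) * Real.sqrt (2 * κ))

/-- Decreasing fundamental solution of `(σ²/2)u'' + κ(μ−x)u' − ρu = 0`. -/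
noncomputable def phi (κ μ σ ρ : ℝ) (x : ℝ) : ℝ :=
  Real.exp (κ * (x - μ) ^ 2 / (2 * σ ^ 2)) *
    Dcyl (-(ρ / κ)) (((x - μ) / σ) * Real.sqrt (2 * κ))

/-- `R̃(z,y) = (μκ + ρz − β(ρ+2κ)y)/(ρ(ρ+κ))`. -/
noncomputable def Rt (κ μ ρ β : ℝ) (z y : ℝ) : ℝ :=
  (μ * κ + ρ * z - β * (ρ + 2 * κ) * y) / (ρ * (ρ + κ))

/-- `Q_k(z) = ψ^{(k)}(z)ψ^{(k+2)}(z) − (ψ^{(k+1)}(z))²`. -/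
noncomputable def Q (κ μ σ ρ : ℝ) (k : ℕ) (z : ℝ) : ℝ :=
  iteratedDeriv k (psi κ μ σ ρ) z * iteratedDeriv (k + 2) (psi κ μ σ ρ) z
    - (iteratedDeriv (k + 1) (psi κ μ σ ρ) z) ^ 2

/-- `D(y,z) = ψ(z)[(ρ+κ)(c − R̃(z,y))Q₁(z) + Q₀'(z)]`. -/
noncomputable def Dfun (κ μ σ ρ β c : ℝ) (y z : ℝ) : ℝ :=
  psi κ μ σ ρ z *
    ((ρ + κ) * (c - Rt κ μ ρ β z y) * Q κ μ σ ρ 1 z + deriv (Q κ μ σ ρ 0) z)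

/-- `N(y,z) = Q₀(z)[((ρ+2κ)/ρ)ψ'(z) + (ρ+κ)(c − R̃(z,y))ψ''(z) + ψ'(z)]`. -/
noncomputable def Nfun (κ μ σ ρ β c : ℝ) (y z : ℝ) : ℝ :=
  Q κ μ σ ρ 0 z *
    ((ρ + 2 * κ) / ρ * deriv (psi κ μ σ ρ) z +
      ((ρ + κ) * (c - Rt κ μ ρ β z y) * iteratedDeriv 2 (psi κ μ σ ρ) z
        + deriv (psi κ μ σ ρ) z))

/-- `H(x) = ψ'(x)(c − R̃(x, ybar)) + (ρ+κ)⁻¹ψ(x)`. -/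
noncomputable def Hfun (κ μ σ ρ β c ybar : ℝ) (x : ℝ) : ℝ :=
  deriv (psi κ μ σ ρ) x * (c - Rt κ μ ρ β x ybar) + (ρ + κ)⁻¹ * psi κ μ σ ρ x


open MeasureTheory Real Filter Topology Polynomial

noncomputable def Jf (c w t : ℝ) : ℝ := t ^ (c - 1) * Real.exp (-t ^ 2 / 2 + w * t)

noncomputable def Jint (c w : ℝ) : ℝ := ∫ t in Ioi (0:ℝ), Jf c w t

lemma Jf_contOn (c w : ℝ) : ContinuousOn (Jf c w) (Ioi 0) := by
  have hexp : Continuous fun t : ℝ => Real.exp (-t ^ 2 / 2 + w * t) := by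
    exact Real.continuous_exp.comp (((continuous_pow 2).neg.div_const 2).add
      (continuous_const.mul continuous_id))
  intro t ht
  exact (continuousWithinAt_id.rpow_const (Or.inl (ne_of_gt ht))).mul
    hexp.continuousWithinAt

lemma Jf_nonneg {c w t : ℝ} (ht : 0 < t) : 0 ≤ Jf c w t :=
  mul_nonneg (Real.rpow_nonneg ht.le _) (Real.exp_pos _).le

lemma Jf_pos {c w t : ℝ} (ht : 0 < t) : 0 < Jf c w t :=
  mul_pos (Real.rpow_pos_of_pos ht _) (Real.exp_pos _)

lemma Jf_ae_nonneg (c w : ℝ) : 0 ≤ᵐ[volume.restrict (Ioi (0:ℝ))] Jf c w := by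
  have : ∀ᵐ t ∂volume.restrict (Ioi (0:ℝ)), t ∈ Ioi (0:ℝ) :=
    ae_restrict_mem measurableSet_Ioi
  filter_upwards [this] with t ht
  exact Jf_nonneg ht

lemma Jf_integrableOn {c : ℝ} (hc : 0 < c) (w : ℝ) : IntegrableOn (Jf c w) (Ioi 0) := by
  have base : IntegrableOn (fun t : ℝ => t ^ (c - 1) * Real.exp (-(1/4 : ℝ) * t ^ 2)) (Ioi 0) :=
    integrableOn_rpow_mul_exp_neg_mul_sq (by norm_num) (by linarith)
  have base' : IntegrableOn
      (fun t : ℝ => Real.exp (w ^ 2) * (t ^ (c - 1) * Real.exp (-(1/4 : ℝ) * t ^ 2)))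
      (Ioi 0) := base.const_mul _
  refine base'.mono' ((Jf_contOn c w).aestronglyMeasurable measurableSet_Ioi) ?_
  filter_upwards [ae_restrict_mem measurableSet_Ioi] with t ht
  have ht' : (0:ℝ) < t := ht
  rw [Real.norm_of_nonneg (Jf_nonneg ht')]
  unfold Jf
  rw [show Real.exp (w^2) * (t ^ (c-1) * Real.exp (-(1/4:ℝ) * t^2))
      = t ^ (c-1) * (Real.exp (w^2) * Real.exp (-(1/4:ℝ) * t^2)) by ring, ← Real.exp_add]
  refine mul_le_mul_of_nonneg_left (Real.exp_le_exp.mpr ?_) (Real.rpow_nonneg ht'.le _)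
  nlinarith [sq_nonneg (t/2 - w)]

lemma Jint_pos {c : ℝ} (hc : 0 < c) (w : ℝ) : 0 < Jint c w := by
  rw [Jint, setIntegral_pos_iff_support_of_nonneg_ae (Jf_ae_nonneg c w) (Jf_integrableOn hc w)]
  have hsub : Ioi (0:ℝ) ⊆ Function.support (Jf c w) ∩ Ioi 0 :=
    fun t ht => ⟨ne_of_gt (Jf_pos ht), ht⟩
  have h1 : (0:ENNReal) < volume (Ioi (0:ℝ)) := by simp
  exact lt_of_lt_of_le h1 (measure_mono hsub)

lemma Jf_shift {c w t : ℝ} (ht : 0 < t) : Jf (c + 1) w t = t * Jf c w t := by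
  unfold Jf
  rw [show c + 1 - 1 = (c - 1) + 1 by ring, Real.rpow_add_one (ne_of_gt ht)]
  ring

lemma Jf_shift2 {c w t : ℝ} (ht : 0 < t) : Jf (c + 2) w t = t * Jf (c + 1) w t := by
  rw [show c + 2 = (c + 1) + 1 by ring, Jf_shift ht]

lemma Jf_shift3 {c w t : ℝ} (ht : 0 < t) : Jf (c + 3) w t = t * Jf (c + 2) w t := by
  rw [show c + 3 = (c + 2) + 1 by ring, Jf_shift ht]

lemma Jf_shift4 {c w t : ℝ} (ht : 0 < t) : Jf (c + 4) w t = t * Jf (c + 3) w t := by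
  rw [show c + 4 = (c + 3) + 1 by ring, Jf_shift ht]

/-- the quadratic-square integrand written as a linear combination of the `Jf`s. -/
noncomputable def Jcomb (c w x0 x1 x2 : ℝ) (t : ℝ) : ℝ :=
  x0 ^ 2 * Jf c w t + 2 * x0 * x1 * Jf (c + 1) w t + (x1 ^ 2 + 2 * x0 * x2) * Jf (c + 2) w t
    + 2 * x1 * x2 * Jf (c + 3) w t + x2 ^ 2 * Jf (c + 4) w t

lemma Jcomb_eq {c w x0 x1 x2 t : ℝ} (ht : 0 < t) :
    Jcomb c w x0 x1 x2 t = (x0 + x1 * t + x2 * t ^ 2) ^ 2 * Jf c w t := by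
  unfold Jcomb
  rw [Jf_shift4 ht, Jf_shift3 ht, Jf_shift2 ht, Jf_shift ht]
  ring

lemma Jcomb_integrableOn {c : ℝ} (hc : 0 < c) (w x0 x1 x2 : ℝ) :
    IntegrableOn (Jcomb c w x0 x1 x2) (Ioi 0) := by
  unfold Jcomb
  exact (((((Jf_integrableOn hc w).const_mul _).add
    ((Jf_integrableOn (by linarith : (0:ℝ) < c + 1) w).const_mul _)).add
    ((Jf_integrableOn (by linarith : (0:ℝ) < c + 2) w).const_mul _)).add
    ((Jf_integrableOn (by linarith : (0:ℝ) < c + 3) w).const_mul _)).add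
    ((Jf_integrableOn (by linarith : (0:ℝ) < c + 4) w).const_mul _)

lemma Jcomb_integral {c : ℝ} (hc : 0 < c) (w x0 x1 x2 : ℝ) :
    ∫ t in Ioi (0:ℝ), Jcomb c w x0 x1 x2 t
      = x0 ^ 2 * Jint c w + 2 * x0 * x1 * Jint (c + 1) w
        + (x1 ^ 2 + 2 * x0 * x2) * Jint (c + 2) w + 2 * x1 * x2 * Jint (c + 3) w
        + x2 ^ 2 * Jint (c + 4) w := by
  have i0 : IntegrableOn (fun t => x0 ^ 2 * Jf c w t) (Ioi 0) :=
    (Jf_integrableOn (by linarith) w).const_mul _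
  have i1 : IntegrableOn (fun t => 2 * x0 * x1 * Jf (c + 1) w t) (Ioi 0) :=
    (Jf_integrableOn (by linarith) w).const_mul _
  have i2 : IntegrableOn (fun t => (x1 ^ 2 + 2 * x0 * x2) * Jf (c + 2) w t) (Ioi 0) :=
    (Jf_integrableOn (by linarith) w).const_mul _
  have i3 : IntegrableOn (fun t => 2 * x1 * x2 * Jf (c + 3) w t) (Ioi 0) :=
    (Jf_integrableOn (by linarith) w).const_mul _
  have i4 : IntegrableOn (fun t => x2 ^ 2 * Jf (c + 4) w t) (Ioi 0) :=
    (Jf_integrableOn (by linarith) w).const_mul _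
  have i01 : IntegrableOn (fun t => x0 ^ 2 * Jf c w t + 2 * x0 * x1 * Jf (c + 1) w t)
      (Ioi 0) := i0.add i1
  have i012 : IntegrableOn (fun t => x0 ^ 2 * Jf c w t + 2 * x0 * x1 * Jf (c + 1) w t
      + (x1 ^ 2 + 2 * x0 * x2) * Jf (c + 2) w t) (Ioi 0) := i01.add i2
  have i0123 : IntegrableOn (fun t => x0 ^ 2 * Jf c w t + 2 * x0 * x1 * Jf (c + 1) w t
      + (x1 ^ 2 + 2 * x0 * x2) * Jf (c + 2) w t + 2 * x1 * x2 * Jf (c + 3) w t)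
      (Ioi 0) := i012.add i3
  unfold Jcomb Jint
  rw [integral_add i0123 i4, integral_add i012 i3, integral_add i01 i2, integral_add i0 i1,
    integral_const_mul, integral_const_mul, integral_const_mul, integral_const_mul,
    integral_const_mul]

lemma quad_poly_roots_finite {x0 x1 x2 : ℝ} (hx : ¬ (x0 = 0 ∧ x1 = 0 ∧ x2 = 0)) :
    {t : ℝ | x0 + x1 * t + x2 * t ^ 2 = 0}.Finite := by
  have hp : (C x0 + C x1 * X + C x2 * X ^ 2 : ℝ[X]) ≠ 0 := by
    intro h
    apply hx
    refine ⟨?_, ?_, ?_⟩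
    · have := congrArg (fun p => Polynomial.coeff p 0) h; simpa using this
    · have := congrArg (fun p => Polynomial.coeff p 1) h; simpa using this
    · have := congrArg (fun p => Polynomial.coeff p 2) h; simpa using this
  have := Polynomial.finite_setOf_isRoot hp
  refine this.subset fun t ht => ?_
  simp only [mem_setOf_eq, IsRoot, eval_add, eval_mul, eval_pow, eval_C, eval_X]
  simpa using ht

lemma quad_pos {c : ℝ} (hc : 0 < c) (w x0 x1 x2 : ℝ) (hx : ¬ (x0 = 0 ∧ x1 = 0 ∧ x2 = 0)) :
    0 < x0 ^ 2 * Jint c w + 2 * x0 * x1 * Jint (c + 1) w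
        + (x1 ^ 2 + 2 * x0 * x2) * Jint (c + 2) w + 2 * x1 * x2 * Jint (c + 3) w
        + x2 ^ 2 * Jint (c + 4) w := by
  rw [← Jcomb_integral hc w x0 x1 x2]
  have hnn : 0 ≤ᵐ[volume.restrict (Ioi (0:ℝ))] Jcomb c w x0 x1 x2 := by
    filter_upwards [ae_restrict_mem measurableSet_Ioi] with t ht
    rw [Jcomb_eq ht]
    exact mul_nonneg (sq_nonneg _) (Jf_nonneg ht)
  rw [setIntegral_pos_iff_support_of_nonneg_ae hnn (Jcomb_integrableOn hc w x0 x1 x2)]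
  set R := {t : ℝ | x0 + x1 * t + x2 * t ^ 2 = 0} with hR
  have hfin : R.Finite := quad_poly_roots_finite hx
  have hsub : Ioi (0:ℝ) \ R ⊆ Function.support (Jcomb c w x0 x1 x2) ∩ Ioi 0 := by
    rintro t ⟨ht, htR⟩
    refine ⟨?_, ht⟩
    rw [Function.mem_support, Jcomb_eq ht]
    have hq : x0 + x1 * t + x2 * t ^ 2 ≠ 0 := htR
    exact ne_of_gt (mul_pos (by positivity) (Jf_pos ht))
  have hdiff : volume (Ioi (0:ℝ) \ R) = volume (Ioi (0:ℝ)) :=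
    measure_diff_null (hfin.measure_zero volume)
  have h1 : (0:ENNReal) < volume (Ioi (0:ℝ) \ R) := by rw [hdiff]; simp
  exact lt_of_lt_of_le h1 (measure_mono hsub)

lemma hankel2_pos {c : ℝ} (hc : 0 < c) (w : ℝ) :
    Jint (c + 1) w ^ 2 < Jint c w * Jint (c + 2) w := by
  have hJ0 := Jint_pos hc w
  have hne : Jint c w ≠ 0 := ne_of_gt hJ0
  have h := quad_pos hc w (-(Jint (c + 1) w / Jint c w)) 1 0 (by simp)
  have e : (-(Jint (c + 1) w / Jint c w)) ^ 2 * Jint c w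
      + 2 * (-(Jint (c + 1) w / Jint c w)) * 1 * Jint (c + 1) w
      + (1 ^ 2 + 2 * (-(Jint (c + 1) w / Jint c w)) * 0) * Jint (c + 2) w
      + 2 * 1 * 0 * Jint (c + 3) w + 0 ^ 2 * Jint (c + 4) w
      = Jint (c + 2) w - Jint (c + 1) w ^ 2 / Jint c w := by
    field_simp
    ring
  rw [e] at h
  have h2 : Jint (c + 1) w ^ 2 / Jint c w < Jint (c + 2) w := by linarith
  calc Jint (c + 1) w ^ 2 = Jint (c + 1) w ^ 2 / Jint c w * Jint c w := by field_simp
  _ < Jint (c + 2) w * Jint c w := by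
      exact mul_lt_mul_of_pos_right h2 hJ0
  _ = Jint c w * Jint (c + 2) w := by ring

lemma hankel3_pos {c : ℝ} (hc : 0 < c) (w : ℝ) :
    0 < Jint c w * (Jint (c + 2) w * Jint (c + 4) w - Jint (c + 3) w ^ 2)
      - Jint (c + 1) w * (Jint (c + 1) w * Jint (c + 4) w - Jint (c + 2) w * Jint (c + 3) w)
      + Jint (c + 2) w * (Jint (c + 1) w * Jint (c + 3) w - Jint (c + 2) w ^ 2) := by
  set J0 := Jint c w
  set J1 := Jint (c + 1) w
  set J2 := Jint (c + 2) w
  set J3 := Jint (c + 3) w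
  set J4 := Jint (c + 4) w
  have hM2 : 0 < J0 * J2 - J1 ^ 2 := by have := hankel2_pos hc w; nlinarith
  have hx2 : J0 * J2 - J1 ^ 2 ≠ 0 := ne_of_gt hM2
  have h := quad_pos hc w (J1 * J3 - J2 * J2) (J1 * J2 - J0 * J3) (J0 * J2 - J1 * J1)
    (by rintro ⟨-, -, h3⟩; apply hx2; nlinarith [h3])
  have key : (J1 * J3 - J2 * J2) ^ 2 * J0 + 2 * (J1 * J3 - J2 * J2) * (J1 * J2 - J0 * J3) * J1
      + ((J1 * J2 - J0 * J3) ^ 2 + 2 * (J1 * J3 - J2 * J2) * (J0 * J2 - J1 * J1)) * J2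
      + 2 * (J1 * J2 - J0 * J3) * (J0 * J2 - J1 * J1) * J3 + (J0 * J2 - J1 * J1) ^ 2 * J4
      = (J0 * J2 - J1 ^ 2) * (J0 * (J2 * J4 - J3 ^ 2) - J1 * (J1 * J4 - J2 * J3)
          + J2 * (J1 * J3 - J2 ^ 2)) := by ring
  rw [key] at h
  rcases mul_pos_iff.mp h with ⟨-, hD⟩ | ⟨hneg, -⟩
  · exact hD
  · linarith

lemma Jint_rec {c : ℝ} (hc : 0 < c) (w : ℝ) :
    Jint (c + 2) w = w * Jint (c + 1) w + c * Jint c w := by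
  set g : ℝ → ℝ := fun t => t ^ c * Real.exp (-t ^ 2 / 2 + w * t) with hg
  have hderiv : ∀ t ∈ Ioi (0:ℝ), HasDerivAt g
      (c * Jf c w t + w * Jf (c + 1) w t - Jf (c + 2) w t) t := by
    intro t ht
    have ht' : (0:ℝ) < t := ht
    have h1 : HasDerivAt (fun x : ℝ => x ^ c) (c * t ^ (c - 1)) t :=
      Real.hasDerivAt_rpow_const (Or.inl (ne_of_gt ht'))
    have h2 : HasDerivAt (fun x : ℝ => -x ^ 2 / 2 + w * x) (-(t * 2) / 2 + w) t := by
      have ha : HasDerivAt (fun x : ℝ => -x ^ 2 / 2) (-(t * 2) / 2) t := by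
        have := ((hasDerivAt_pow 2 t).neg.div_const 2)
        simpa using this.congr_deriv (by simp; ring)
      have hb : HasDerivAt (fun x : ℝ => w * x) w t := by
        simpa using (hasDerivAt_id t).const_mul w
      exact ha.add hb
    have h3 := h1.mul h2.exp
    have key : c * t ^ (c - 1) * Real.exp (-t ^ 2 / 2 + w * t)
        + t ^ c * (Real.exp (-t ^ 2 / 2 + w * t) * (-(t * 2) / 2 + w))
        = c * Jf c w t + w * Jf (c + 1) w t - Jf (c + 2) w t := by
      have e1 : Jf (c + 1) w t = t ^ c * Real.exp (-t ^ 2 / 2 + w * t) := by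
        unfold Jf; rw [show c + 1 - 1 = c by ring]
      have e2 : Jf (c + 2) w t = t ^ c * t * Real.exp (-t ^ 2 / 2 + w * t) := by
        unfold Jf
        rw [show c + 2 - 1 = c + 1 by ring, Real.rpow_add_one (ne_of_gt ht')]
      rw [e1, e2]
      unfold Jf
      ring
    rw [key] at h3
    exact h3
  have hcont : ContinuousWithinAt g (Ici 0) 0 := by
    have h1 : ContinuousAt (fun x : ℝ => x ^ c) 0 :=
      Real.continuousAt_rpow_const 0 c (Or.inr hc.le)
    have h2 : Continuous fun x : ℝ => Real.exp (-x ^ 2 / 2 + w * x) :=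
      Real.continuous_exp.comp (((continuous_pow 2).neg.div_const 2).add
        (continuous_const.mul continuous_id))
    exact (h1.mul h2.continuousAt).continuousWithinAt
  have htend : Tendsto g atTop (nhds 0) := by
    have hup : ∀ᶠ t in atTop, g t ≤ Real.exp (-t) := by
      filter_upwards [eventually_ge_atTop (max 1 (2 * (c + w + 1)))] with t ht
      have ht1 : (1:ℝ) ≤ t := le_trans (le_max_left _ _) ht
      have ht2 : 2 * (c + w + 1) ≤ t := le_trans (le_max_right _ _) ht
      have ht' : (0:ℝ) < t := by linarith
      have hlog : Real.log t ≤ t := by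
        have := Real.log_le_sub_one_of_pos ht'
        linarith
      rw [hg]
      simp only
      rw [Real.rpow_def_of_pos ht', ← Real.exp_add]
      apply Real.exp_le_exp.mpr
      have hcl : Real.log t * c ≤ t * c := by
        apply mul_le_mul_of_nonneg_right hlog hc.le
      nlinarith
    have hlo : ∀ᶠ t in atTop, (0:ℝ) ≤ g t := by
      filter_upwards [eventually_gt_atTop (0:ℝ)] with t ht
      exact mul_nonneg (Real.rpow_nonneg ht.le _) (Real.exp_pos _).le
    have hexp : Tendsto (fun t : ℝ => Real.exp (-t)) atTop (nhds 0) :=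
      Real.tendsto_exp_atBot.comp tendsto_neg_atTop_atBot
    exact tendsto_of_tendsto_of_tendsto_of_le_of_le' tendsto_const_nhds hexp hlo hup
  have i0 : IntegrableOn (fun t => c * Jf c w t) (Ioi 0) :=
    (Jf_integrableOn hc w).const_mul _
  have i1 : IntegrableOn (fun t => w * Jf (c + 1) w t) (Ioi 0) :=
    (Jf_integrableOn (by linarith : (0:ℝ) < c + 1) w).const_mul _
  have i2 : IntegrableOn (Jf (c + 2) w) (Ioi 0) :=
    Jf_integrableOn (by linarith : (0:ℝ) < c + 2) w
  have i01 : IntegrableOn (fun t => c * Jf c w t + w * Jf (c + 1) w t) (Ioi 0) := i0.add i1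
  have f'int : IntegrableOn
      (fun t => c * Jf c w t + w * Jf (c + 1) w t - Jf (c + 2) w t) (Ioi 0) := i01.sub i2
  have hFTC := MeasureTheory.integral_Ioi_of_hasDerivAt_of_tendsto hcont hderiv f'int htend
  have hg0 : g 0 = 0 := by
    rw [hg]
    simp only
    rw [Real.zero_rpow (ne_of_gt hc)]
    ring
  rw [hg0, sub_zero] at hFTC
  have hsplit : ∫ t in Ioi (0:ℝ), (c * Jf c w t + w * Jf (c + 1) w t - Jf (c + 2) w t)
      = c * Jint c w + w * Jint (c + 1) w - Jint (c + 2) w := by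
    unfold Jint
    rw [integral_sub i01 i2, integral_add i0 i1, integral_const_mul, integral_const_mul]
  rw [hsplit] at hFTC
  linarith

lemma hasDerivAt_Jint {c : ℝ} (hc : 0 < c) (w : ℝ) :
    HasDerivAt (fun u => Jint c u) (Jint (c + 1) w) w := by
  have main := hasDerivAt_integral_of_dominated_loc_of_deriv_le
    (F := fun x t => Jf c x t) (F' := fun x t => t * Jf c x t)
    (x₀ := w) (s := Metric.ball w 1) (μ := volume.restrict (Ioi (0:ℝ)))
    (bound := fun t => t * Jf c (w + 1) t)
    (Metric.ball_mem_nhds w one_pos)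
    (Eventually.of_forall fun x => (Jf_contOn c x).aestronglyMeasurable measurableSet_Ioi)
    (Jf_integrableOn hc w)
    ((continuousOn_id.mul (Jf_contOn c w)).aestronglyMeasurable measurableSet_Ioi)
    ?_ ?_ ?_
  · have heq : ∫ t in Ioi (0:ℝ), t * Jf c w t = Jint (c + 1) w := by
      unfold Jint
      refine (setIntegral_congr_fun measurableSet_Ioi fun t ht => ?_).symm
      exact Jf_shift ht
    rw [heq] at main
    exact main.2
  · -- bound
    filter_upwards [ae_restrict_mem measurableSet_Ioi] with t ht
    intro x hx
    have ht' : (0:ℝ) < t := ht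
    have hxw : x ≤ w + 1 := by
      have h := abs_lt.mp (by simpa [Real.norm_eq_abs] using mem_ball_iff_norm.mp hx :
        |x - w| < 1)
      linarith [h.2]
    have h1 : 0 ≤ t * Jf c x t := mul_nonneg ht'.le (Jf_nonneg ht')
    rw [Real.norm_of_nonneg h1]
    unfold Jf
    have : Real.exp (-t ^ 2 / 2 + x * t) ≤ Real.exp (-t ^ 2 / 2 + (w + 1) * t) := by
      apply Real.exp_le_exp.mpr
      nlinarith
    have h2 := mul_le_mul_of_nonneg_left this (Real.rpow_nonneg ht'.le (c - 1))
    have h3 := mul_le_mul_of_nonneg_left h2 ht'.le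
    linarith
  · -- bound integrable
    exact (Jf_integrableOn (by linarith : (0:ℝ) < c + 1) (w + 1)).congr_fun
      (fun t ht => Jf_shift ht) measurableSet_Ioi
  · -- differentiability
    filter_upwards [ae_restrict_mem measurableSet_Ioi] with t ht
    intro x hx
    have ht' : (0:ℝ) < t := ht
    have h1 : HasDerivAt (fun x : ℝ => -t ^ 2 / 2 + x * t) t x := by
      simpa using (hasDerivAt_mul_const t).const_add (-t ^ 2 / 2)
    have h2 := (h1.exp.const_mul (t ^ (c - 1) : ℝ))
    have key : t ^ (c - 1) * (Real.exp (-t ^ 2 / 2 + x * t) * t) = t * Jf c x t := by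
      unfold Jf; ring
    rw [key] at h2
    exact h2

lemma psi_eq (κ μ σ ρ : ℝ) (hκ : 0 < κ) (hσ : 0 < σ) (x : ℝ) :
    psi κ μ σ ρ x
      = (Real.Gamma (ρ/κ))⁻¹ * Jint (ρ/κ) (Real.sqrt (2*κ)/σ * (x - μ)) := by
  unfold psi Dcyl Jint
  rw [neg_neg]
  have hfun : (fun t : ℝ => t ^ (ρ/κ - 1) *
      Real.exp (-t ^ 2 / 2 - -((x - μ) / σ) * Real.sqrt (2 * κ) * t))
      = Jf (ρ/κ) (Real.sqrt (2*κ)/σ * (x - μ)) := by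
    funext t
    unfold Jf
    congr 1
    congr 1
    field_simp
    ring
  rw [hfun]
  have hXsq : (-((x - μ)/σ) * Real.sqrt (2*κ))^2 = (x-μ)^2/σ^2 * (2*κ) := by
    rw [mul_pow, Real.sq_sqrt (by positivity : (0:ℝ) ≤ 2*κ)]
    ring
  have harr : Real.exp (κ*(x-μ)^2/(2*σ^2)) *
      (Real.exp (-(-((x - μ)/σ) * Real.sqrt (2*κ))^2/4) / Real.Gamma (ρ/κ)
        * Jint (ρ/κ) (Real.sqrt (2*κ)/σ * (x - μ)))
      = (Real.exp (κ*(x-μ)^2/(2*σ^2)) * Real.exp (-(-((x - μ)/σ) * Real.sqrt (2*κ))^2/4))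
        * ((Real.Gamma (ρ/κ))⁻¹ * Jint (ρ/κ) (Real.sqrt (2*κ)/σ * (x - μ))) := by
    ring
  rw [show (∫ t in Ioi (0:ℝ), Jf (ρ/κ) (Real.sqrt (2*κ)/σ * (x - μ)) t)
    = Jint (ρ/κ) (Real.sqrt (2*κ)/σ * (x - μ)) from rfl]
  rw [harr, ← Real.exp_add, hXsq,
    show κ*(x-μ)^2/(2*σ^2) + -((x-μ)^2/σ^2*(2*κ))/4 = 0 by field_simp; ring,
    Real.exp_zero, one_mul]

lemma iteratedDeriv_psi (κ μ σ ρ : ℝ) (hκ : 0 < κ) (hσ : 0 < σ) (hρ : 0 < ρ) (k : ℕ) :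
    ∀ x : ℝ, iteratedDeriv k (psi κ μ σ ρ) x
      = (Real.sqrt (2*κ)/σ)^k * (Real.Gamma (ρ/κ))⁻¹
        * Jint (ρ/κ + k) (Real.sqrt (2*κ)/σ * (x - μ)) := by
  induction k with
  | zero =>
    intro x
    rw [iteratedDeriv_zero, psi_eq κ μ σ ρ hκ hσ x]
    norm_num
  | succ k ih =>
    intro x
    have hfun : iteratedDeriv k (psi κ μ σ ρ)
        = fun y => (Real.sqrt (2*κ)/σ)^k * (Real.Gamma (ρ/κ))⁻¹
          * Jint (ρ/κ + k) (Real.sqrt (2*κ)/σ * (y - μ)) := funext ih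
    rw [iteratedDeriv_succ, hfun]
    have hc : (0:ℝ) < ρ/κ + k :=
      add_pos_of_pos_of_nonneg (div_pos hρ hκ) (Nat.cast_nonneg k)
    have hinner : HasDerivAt (fun y : ℝ => Real.sqrt (2*κ)/σ * (y - μ))
        (Real.sqrt (2*κ)/σ) x := by
      simpa using ((hasDerivAt_id x).sub_const μ).const_mul (Real.sqrt (2*κ)/σ)
    have hcomp := (hasDerivAt_Jint hc (Real.sqrt (2*κ)/σ * (x - μ))).comp x hinner
    simp only [Function.comp_def] at hcomp
    have hfull := hcomp.const_mul ((Real.sqrt (2*κ)/σ)^k * (Real.Gamma (ρ/κ))⁻¹)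
    rw [hfull.deriv]
    have hcast : ρ/κ + ((k:ℝ) + 1) = (ρ/κ + k) + 1 := by ring
    push_cast
    rw [hcast]
    ring

lemma hasDerivAt_iteratedDeriv_psi (κ μ σ ρ : ℝ) (hκ : 0 < κ) (hσ : 0 < σ) (hρ : 0 < ρ)
    (k : ℕ) (x : ℝ) :
    HasDerivAt (iteratedDeriv k (psi κ μ σ ρ)) (iteratedDeriv (k+1) (psi κ μ σ ρ) x) x := by
  have hfun : iteratedDeriv k (psi κ μ σ ρ)
      = fun y => (Real.sqrt (2*κ)/σ)^k * (Real.Gamma (ρ/κ))⁻¹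
        * Jint (ρ/κ + k) (Real.sqrt (2*κ)/σ * (y - μ)) :=
    funext (iteratedDeriv_psi κ μ σ ρ hκ hσ hρ k)
  rw [hfun, iteratedDeriv_psi κ μ σ ρ hκ hσ hρ (k+1) x]
  have hc : (0:ℝ) < ρ/κ + k :=
    add_pos_of_pos_of_nonneg (div_pos hρ hκ) (Nat.cast_nonneg k)
  have hinner : HasDerivAt (fun y : ℝ => Real.sqrt (2*κ)/σ * (y - μ))
      (Real.sqrt (2*κ)/σ) x := by
    simpa using ((hasDerivAt_id x).sub_const μ).const_mul (Real.sqrt (2*κ)/σ)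
  have hcomp := (hasDerivAt_Jint hc (Real.sqrt (2*κ)/σ * (x - μ))).comp x hinner
  simp only [Function.comp_def] at hcomp
  have hfull := hcomp.const_mul ((Real.sqrt (2*κ)/σ)^k * (Real.Gamma (ρ/κ))⁻¹)
  refine hfull.congr_deriv ?_
  have hcast : ρ/κ + ((k:ℝ) + 1) = (ρ/κ + k) + 1 := by ring
  push_cast
  rw [hcast]
  ring

lemma hasDerivAt_Q0 (κ μ σ ρ : ℝ) (hκ : 0 < κ) (hσ : 0 < σ) (hρ : 0 < ρ) (z : ℝ) :
    HasDerivAt (Q κ μ σ ρ 0)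
      (iteratedDeriv 0 (psi κ μ σ ρ) z * iteratedDeriv 3 (psi κ μ σ ρ) z
        - iteratedDeriv 1 (psi κ μ σ ρ) z * iteratedDeriv 2 (psi κ μ σ ρ) z) z := by
  have h0 := hasDerivAt_iteratedDeriv_psi κ μ σ ρ hκ hσ hρ 0 z
  have h1 := hasDerivAt_iteratedDeriv_psi κ μ σ ρ hκ hσ hρ 1 z
  have h2 := hasDerivAt_iteratedDeriv_psi κ μ σ ρ hκ hσ hρ 2 z
  have hQ : HasDerivAt (fun y => iteratedDeriv 0 (psi κ μ σ ρ) y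
      * iteratedDeriv (0+2) (psi κ μ σ ρ) y - (iteratedDeriv (0+1) (psi κ μ σ ρ) y)^2)
      (iteratedDeriv 0 (psi κ μ σ ρ) z * iteratedDeriv 3 (psi κ μ σ ρ) z
        - iteratedDeriv 1 (psi κ μ σ ρ) z * iteratedDeriv 2 (psi κ μ σ ρ) z) z := by
    have := (h0.mul (by norm_num at h2 ⊢; exact h2 : HasDerivAt
      (iteratedDeriv (0+2) (psi κ μ σ ρ)) (iteratedDeriv 3 (psi κ μ σ ρ) z) z)).sub
      ((by norm_num at h1 ⊢; exact h1 : HasDerivAt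
        (iteratedDeriv (0+1) (psi κ μ σ ρ)) (iteratedDeriv 2 (psi κ μ σ ρ) z) z).pow 2)
    refine this.congr_deriv ?_
    norm_num
    ring
  exact hQ

/-- If `D(y,z) ≥ 0` then `N(y,z) > D(y,z)`. -/
theorem stmt12 (κ σ ρ μ β c : ℝ) (hκ : 0 < κ) (hσ : 0 < σ) (hρ : 0 < ρ)
    (hβ : 0 < β) (hc : 0 ≤ c) :
    ∀ y z : ℝ, 0 ≤ Dfun κ μ σ ρ β c y z → Dfun κ μ σ ρ β c y z < Nfun κ μ σ ρ β c y z := by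
  intro y z hD
  have hb : (0:ℝ) < ρ/κ := div_pos hρ hκ
  have hΓ : (0:ℝ) < Real.Gamma (ρ/κ) := Real.Gamma_pos_of_pos hb
  have hm : (0:ℝ) < Real.sqrt (2*κ)/σ :=
    div_pos (Real.sqrt_pos.mpr (by linarith)) hσ
  set m : ℝ := Real.sqrt (2*κ)/σ with hmdef
  set w : ℝ := m * (z - μ) with hwdef
  set Γi : ℝ := (Real.Gamma (ρ/κ))⁻¹ with hΓidef
  have hΓi : 0 < Γi := inv_pos.mpr hΓ
  -- iterated derivative values
  have hP0 : iteratedDeriv 0 (psi κ μ σ ρ) z = Γi * Jint (ρ/κ) w := by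
    rw [iteratedDeriv_psi κ μ σ ρ hκ hσ hρ 0 z, ← hmdef, ← hwdef, ← hΓidef]
    norm_num
  have hP1 : iteratedDeriv 1 (psi κ μ σ ρ) z = m^1 * Γi * Jint (ρ/κ + 1) w := by
    rw [iteratedDeriv_psi κ μ σ ρ hκ hσ hρ 1 z, ← hmdef, ← hwdef, ← hΓidef]
    norm_num
  have hP2 : iteratedDeriv 2 (psi κ μ σ ρ) z = m^2 * Γi * Jint (ρ/κ + 2) w := by
    rw [iteratedDeriv_psi κ μ σ ρ hκ hσ hρ 2 z, ← hmdef, ← hwdef, ← hΓidef]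
    norm_num
  have hP3 : iteratedDeriv 3 (psi κ μ σ ρ) z = m^3 * Γi * Jint (ρ/κ + 3) w := by
    rw [iteratedDeriv_psi κ μ σ ρ hκ hσ hρ 3 z, ← hmdef, ← hwdef, ← hΓidef]
    norm_num
  -- determinant and Cauchy-Schwarz facts
  have hq1 := hankel2_pos hb w
  have hq2 := hankel2_pos (by linarith : (0:ℝ) < ρ/κ + 1) w
  have hdet0 := hankel3_pos hb w
  have hdet1 := hankel3_pos (by linarith : (0:ℝ) < ρ/κ + 1) w
  have hrec2 := Jint_rec hb w
  have hrec3 := Jint_rec (by linarith : (0:ℝ) < ρ/κ + 1) w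
  have hrec4 := Jint_rec (by linarith : (0:ℝ) < ρ/κ + 2) w
  have hrec5 := Jint_rec (by linarith : (0:ℝ) < ρ/κ + 3) w
  rw [show ρ/κ + 1 + 1 = ρ/κ + 2 by ring, show ρ/κ + 1 + 2 = ρ/κ + 3 by ring] at hq2 hrec3
  rw [show ρ/κ + 1 + 1 = ρ/κ + 2 by ring, show ρ/κ + 1 + 2 = ρ/κ + 3 by ring,
    show ρ/κ + 1 + 3 = ρ/κ + 4 by ring, show ρ/κ + 1 + 4 = ρ/κ + 5 by ring] at hdet1
  rw [show ρ/κ + 2 + 1 = ρ/κ + 3 by ring, show ρ/κ + 2 + 2 = ρ/κ + 4 by ring] at hrec4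
  rw [show ρ/κ + 3 + 1 = ρ/κ + 4 by ring, show ρ/κ + 3 + 2 = ρ/κ + 5 by ring] at hrec5
  set G0 : ℝ := Jint (ρ/κ) w with hG0def
  set G1 : ℝ := Jint (ρ/κ + 1) w with hG1def
  set G2 : ℝ := Jint (ρ/κ + 2) w with hG2def
  set G3 : ℝ := Jint (ρ/κ + 3) w with hG3def
  set G4 : ℝ := Jint (ρ/κ + 4) w with hG4def
  set G5 : ℝ := Jint (ρ/κ + 5) w with hG5def
  have hG0pos : 0 < G0 := Jint_pos hb w
  have hG1pos : 0 < G1 := Jint_pos (by linarith) w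
  have hG2pos : 0 < G2 := Jint_pos (by linarith) w
  -- values of the pieces appearing in Dfun/Nfun
  have hQ1v : Q κ μ σ ρ 1 z = m^4 * Γi^2 * (G1*G3 - G2^2) := by
    show iteratedDeriv 1 (psi κ μ σ ρ) z * iteratedDeriv 3 (psi κ μ σ ρ) z
      - (iteratedDeriv 2 (psi κ μ σ ρ) z)^2 = _
    rw [hP1, hP2, hP3]
    ring
  have hQ0v : Q κ μ σ ρ 0 z = m^2 * Γi^2 * (G0*G2 - G1^2) := by
    show iteratedDeriv 0 (psi κ μ σ ρ) z * iteratedDeriv 2 (psi κ μ σ ρ) z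
      - (iteratedDeriv 1 (psi κ μ σ ρ) z)^2 = _
    rw [hP0, hP1, hP2]
    ring
  have hdQ0 : deriv (Q κ μ σ ρ 0) z = m^3 * Γi^2 * (G0*G3 - G1*G2) := by
    rw [(hasDerivAt_Q0 κ μ σ ρ hκ hσ hρ z).deriv, hP0, hP1, hP2, hP3]
    ring
  have hdpsi : deriv (psi κ μ σ ρ) z = m * Γi * G1 := by
    have h := hasDerivAt_iteratedDeriv_psi κ μ σ ρ hκ hσ hρ 0 z
    rw [iteratedDeriv_zero] at h
    rw [h.deriv, hP1]
    ring
  have hpsiv : psi κ μ σ ρ z = Γi * G0 := by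
    have := hP0
    rwa [iteratedDeriv_zero] at this
  -- abbreviations for the final algebra
  set α : ℝ := (ρ + κ) * (c - Rt κ μ ρ β z y) * m with hαdef
  have hDv : Dfun κ μ σ ρ β c y z
      = m^3 * Γi^3 * (G0 * (α * (G1*G3 - G2^2) + (G0*G3 - G1*G2))) := by
    unfold Dfun
    rw [hpsiv, hQ1v, hdQ0, hαdef]
    ring
  have hNv : Nfun κ μ σ ρ β c y z
      = m^3 * Γi^3 * ((G0*G2 - G1^2)
          * ((ρ + 2*κ)/ρ * G1 + (α * G2 + G1))) := by
    unfold Nfun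
    rw [hQ0v, hP2, hdpsi, hαdef]
    ring
  -- reduce to the bracket inequality
  have hmm : 0 < m^3 * Γi^3 := by positivity
  rw [hDv] at hD
  rw [hDv, hNv]
  have hDbr : 0 ≤ G0 * (α * (G1*G3 - G2^2) + (G0*G3 - G1*G2)) :=
    (mul_nonneg_iff_of_pos_left hmm).mp hD
  refine mul_lt_mul_of_pos_left ?_ hmm
  -- now pure algebra with b := ρ/κ
  set b : ℝ := ρ/κ with hbdef
  clear_value α b G5 G4 G3 G2 G1 G0 Γi w m
  have hQ0x : 0 < G0*G2 - G1^2 := by linarith [hq1]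
  have hQ1x : 0 < G1*G3 - G2^2 := by linarith [hq2]
  have hA0 : 0 < G2*(G0*G2 - G1^2) - G0*(G1*G3 - G2^2) := by
    have key0 : G2*(G0*G2 - G1^2) - G0*(G1*G3 - G2^2)
        = G0 * (G2 * G4 - G3 ^ 2) - G1 * (G1 * G4 - G2 * G3) + G2 * (G1 * G3 - G2 ^ 2) := by
      rw [hrec4, hrec3, hrec2]
      ring
    rw [key0]
    exact hdet0
  have hA1 : 0 < (2*b+2)*G1*(G1*G3 - G2^2) - b*(G0*G3 - G1*G2)*G2 := by
    have key1 : (2*b+2)*G1*(G1*G3 - G2^2) - b*(G0*G3 - G1*G2)*G2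
        = G1 * (G3 * G5 - G4 ^ 2) - G2 * (G2 * G5 - G3 * G4) + G3 * (G2 * G4 - G3 ^ 2) := by
      rw [hrec5, hrec4, hrec3, hrec2]
      ring
    rw [key1]
    exact hdet1
  have hα' : 0 ≤ α * (G1*G3 - G2^2) + (G0*G3 - G1*G2) :=
    (mul_nonneg_iff_of_pos_left hG0pos).mp hDbr
  have hρ0 : ρ ≠ 0 := ne_of_gt hρ
  have hκ0 : κ ≠ 0 := ne_of_gt hκ
  have hbne : b ≠ 0 := ne_of_gt hb
  have hτ : (ρ + 2*κ)/ρ = 1 + 2/b := by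
    rw [hbdef]
    field_simp
  rw [hτ]
  -- the key identity
  have hbpos : 0 < b := hb
  have Hid : b * (G1*G3 - G2^2) *
      ((G0*G2 - G1^2) * ((1 + 2/b) * G1 + (α * G2 + G1))
        - G0 * (α * (G1*G3 - G2^2) + (G0*G3 - G1*G2)))
      = b * (α * (G1*G3 - G2^2) + (G0*G3 - G1*G2))
          * (G2*(G0*G2 - G1^2) - G0*(G1*G3 - G2^2))
        + (G0*G2 - G1^2) * ((2*b+2)*G1*(G1*G3 - G2^2) - b*(G0*G3 - G1*G2)*G2) := by
    field_simp
    ring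
  have hRHS : 0 < b * (α * (G1*G3 - G2^2) + (G0*G3 - G1*G2))
          * (G2*(G0*G2 - G1^2) - G0*(G1*G3 - G2^2))
        + (G0*G2 - G1^2) * ((2*b+2)*G1*(G1*G3 - G2^2) - b*(G0*G3 - G1*G2)*G2) := by
    have h1 : 0 ≤ b * (α * (G1*G3 - G2^2) + (G0*G3 - G1*G2))
        * (G2*(G0*G2 - G1^2) - G0*(G1*G3 - G2^2)) := by
      apply mul_nonneg (mul_nonneg hbpos.le hα') hA0.le
    have h2 : 0 < (G0*G2 - G1^2) * ((2*b+2)*G1*(G1*G3 - G2^2) - b*(G0*G3 - G1*G2)*G2) :=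
      mul_pos hQ0x hA1
    linarith
  have hfac : 0 < b * (G1*G3 - G2^2) := mul_pos hbpos hQ1x
  have hprod : 0 < b * (G1*G3 - G2^2) *
      ((G0*G2 - G1^2) * ((1 + 2/b) * G1 + (α * G2 + G1))
        - G0 * (α * (G1*G3 - G2^2) + (G0*G3 - G1*G2))) := by
    rw [Hid]
    exact hRHS
  rcases mul_pos_iff.mp hprod with ⟨-, hgood⟩ | ⟨hbad, -⟩
  · linarith
  · linarith
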